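/- (Outer bound for the broadcast network.) For the broadcast network with source distribution p0(x), every triple (R1, R2, p(y,z|x)) in the coordination capacity region C_{p0} satisfies R1 ≥ I(X;Y), R2 ≥ I(X;Z), and R1 + R2 ≥ I(X;Y,Z), where the mutual informations are computed under the joint distribution p0(x)p(y,z|x). -/

import Mathlib

open Filter

/-- A probability mass function on a finite alphabet. -/
def IsPMF {α : Type} [Fintype α] (p : α → ℝ) : Prop :=
  (∀ a, 0 ≤ p a) ∧ ∑ a, p a = 1

/-- Total variation distance: half the `L¹` distance. -/
noncomputable def tv {α : Type} [Fintype α] (p q : α → ℝ) : ℝ :=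
  (1 / 2) * ∑ a, |p a - q a|

open Classical in
/-- Joint type (empirical distribution) of a sequence. -/
noncomputable def jointType {α : Type} (n : ℕ) (s : Fin n → α) : α → ℝ :=
  fun a => ((Finset.univ.filter fun t => s t = a).card : ℝ) / n

open Classical in
/-- Pushforward of a mass function along a map. -/
noncomputable def pmfMap {S α : Type} [Fintype S] (p : S → ℝ) (f : S → α) : α → ℝ :=
  fun a => ∑ s, if f s = a then p s else 0

/-- Shannon entropy, base 2, with the convention `0 log 0 = 0`. -/
noncomputable def H2 {α : Type} [Fintype α] (p : α → ℝ) : ℝ :=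
  ∑ a, -(p a * Real.logb 2 (p a))

/-- Mutual information `I(f(S); g(S))` for `S ∼ p`. -/
noncomputable def MI {S α β : Type} [Fintype S] [Fintype α] [Fintype β]
    (p : S → ℝ) (f : S → α) (g : S → β) : ℝ :=
  H2 (pmfMap p f) + H2 (pmfMap p g) - H2 (pmfMap p fun s => (f s, g s))

/-- Conditional mutual information `I(f(S); g(S) | h(S))` for `S ∼ p`. -/
noncomputable def condMI {S α β γ : Type} [Fintype S] [Fintype α] [Fintype β] [Fintype γ]
    (p : S → ℝ) (f : S → α) (g : S → β) (h : S → γ) : ℝ :=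
  H2 (pmfMap p fun s => (f s, h s)) + H2 (pmfMap p fun s => (g s, h s))
    - H2 (pmfMap p fun s => (f s, g s, h s)) - H2 (pmfMap p h)

/-- The number of messages `⌈2^{nR}⌉` available at rate `R` and blocklength `n`. -/
noncomputable def msgCount (n : ℕ) (R : ℝ) : ℕ := ⌈(2 : ℝ) ^ ((n : ℝ) * R)⌉₊

open Classical in
/-- Probability of the event `E` under the (mass) distribution `μ`. -/
noncomputable def probOf {α : Type} [Fintype α] (μ : α → ℝ) (E : α → Prop) : ℝ :=
  ∑ a, if E a then μ a else 0

/-- Achievability of `p(y,z|x)` at rates `(R1,R2)` in the broadcast network. -/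
def BroadcastAchievable {𝒳 𝒴 𝒵 : Type} [Fintype 𝒳] [Fintype 𝒴] [Fintype 𝒵]
    (p0 : 𝒳 → ℝ) (R1 R2 : ℝ) (q : 𝒳 → 𝒴 × 𝒵 → ℝ) : Prop :=
  ∃ i : (n : ℕ) → (Fin n → 𝒳) → Fin (msgCount n R1),
  ∃ j : (n : ℕ) → (Fin n → 𝒳) → Fin (msgCount n R2),
  ∃ decY : (n : ℕ) → Fin (msgCount n R1) → (Fin n → 𝒴),
  ∃ decZ : (n : ℕ) → Fin (msgCount n R2) → (Fin n → 𝒵),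
    ∀ ε > 0,
      Tendsto (fun n => probOf (fun xs : Fin n → 𝒳 => ∏ t, p0 (xs t)) fun xs =>
          ε ≤ tv (jointType n fun t => (xs t, decY n (i n xs) t, decZ n (j n xs) t))
              (fun a => p0 a.1 * q a.1 a.2)) atTop (nhds 0)

/-- Coordination capacity region of the broadcast network. -/
def broadcastCapacity {𝒳 𝒴 𝒵 : Type} [Fintype 𝒳] [Fintype 𝒴] [Fintype 𝒵] (p0 : 𝒳 → ℝ) :
    Set (ℝ × ℝ × (𝒳 → 𝒴 × 𝒵 → ℝ)) :=
  closure {v | 0 ≤ v.1 ∧ 0 ≤ v.2.1 ∧ (∀ x, IsPMF (v.2.2 x)) ∧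
    BroadcastAchievable p0 v.1 v.2.1 v.2.2}


namespace OB
set_option linter.unusedSectionVars false
open Real Finset
noncomputable def Hn {α : Type} [Fintype α] (p : α → ℝ) : ℝ := ∑ a, Real.negMulLog (p a)

section A1
variable {S α β : Type} [Fintype S] [Fintype α] [Fintype β]
open Classical in
lemma pmfMap_nonneg {p : S → ℝ} (hp : ∀ s, 0 ≤ p s) (f : S → α) (a : α) :
    0 ≤ pmfMap p f a :=
  Finset.sum_nonneg fun s _ => by split <;> simp [hp s]

open Classical in
lemma pmfMap_marg (p : S → ℝ) (f : S → α) (F : α → ℝ) :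
    ∑ a, pmfMap p f a * F a = ∑ s, p s * F (f s) := by
  unfold pmfMap
  simp only [Finset.sum_mul, ite_mul, zero_mul]
  rw [Finset.sum_comm]
  simp

open Classical in
lemma pmfMap_sum (p : S → ℝ) (f : S → α) : ∑ a, pmfMap p f a = ∑ s, p s := by
  have := pmfMap_marg p f (fun _ => 1)
  simpa using this

open Classical in
lemma le_pmfMap {p : S → ℝ} (hp : ∀ s, 0 ≤ p s) (f : S → α) (s : S) :
    p s ≤ pmfMap p f (f s) := by
  classical
  have : p s = ∑ s' ∈ {s}, if f s' = f s then p s' else 0 := by simp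
  rw [this]
  exact Finset.sum_le_sum_of_subset_of_nonneg (by simp)
    (fun i _ _ => by split <;> simp [hp i])

open Classical in
lemma pmfMap_comp (p : S → ℝ) (f : S → α) (g : α → β) :
    pmfMap p (g ∘ f) = pmfMap (pmfMap p f) g := by
  funext b
  unfold pmfMap
  have step : ∀ a : α, (if g a = b then ∑ s : S, if f s = a then p s else 0 else 0)
      = ∑ s : S, if f s = a then (if g a = b then p s else 0) else 0 := by
    intro a; split <;> simp
  rw [Finset.sum_congr rfl fun a _ => step a, Finset.sum_comm]
  refine Finset.sum_congr rfl fun s _ => ?_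
  rw [Finset.sum_eq_single (f s)] <;> simp +contextual [Function.comp, eq_comm]
end A1

section B1
variable {α β : Type} [Fintype α] [Fintype β]
lemma gibbs (p q : α → ℝ) (hp : ∀ a, 0 ≤ p a) (hq : ∀ a, 0 ≤ q a)
    (hp1 : ∑ a, p a = 1) (hq1 : ∑ a, q a ≤ 1) (hsupp : ∀ a, q a = 0 → p a = 0) :
    Hn p ≤ ∑ a, -(p a * Real.log (q a)) := by
  unfold Hn
  have key : ∀ a, Real.negMulLog (p a) - (-(p a * Real.log (q a))) ≤ q a - p a := by
    intro a
    rcases eq_or_lt_of_le (hp a) with h | h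
    · simp [← h, hq a]
    · have hqa : 0 < q a := lt_of_le_of_ne (hq a) fun h0 => by
        have := hsupp a h0.symm; linarith
      have : Real.negMulLog (p a) + p a * Real.log (q a)
          = p a * Real.log (q a / p a) := by
        rw [Real.log_div (ne_of_gt hqa) (ne_of_gt h)]
        simp [Real.negMulLog]; ring
      have hlog : Real.log (q a / p a) ≤ q a / p a - 1 :=
        Real.log_le_sub_one_of_pos (div_pos hqa h)
      have : Real.negMulLog (p a) + p a * Real.log (q a) ≤ p a * (q a / p a - 1) := by
        rw [this]; exact mul_le_mul_of_nonneg_left hlog (le_of_lt h)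
      have heq : p a * (q a / p a - 1) = q a - p a := by field_simp
      rw [heq] at this; linarith
  have hsum : ∑ a, (Real.negMulLog (p a) - (-(p a * Real.log (q a)))) ≤ ∑ a, (q a - p a) :=
    Finset.sum_le_sum fun a _ => key a
  rw [Finset.sum_sub_distrib, Finset.sum_sub_distrib, hp1] at hsum
  linarith

lemma negMulLog_add_le {a b : ℝ} (ha : 0 ≤ a) (hb : 0 ≤ b) :
    Real.negMulLog (a + b) ≤ Real.negMulLog a + Real.negMulLog b := by
  rcases eq_or_lt_of_le ha with h | h
  · simp [← h]
  rcases eq_or_lt_of_le hb with h' | h'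
  · simp [← h']
  have l1 : Real.log a ≤ Real.log (a + b) := Real.log_le_log h (by linarith)
  have l2 : Real.log b ≤ Real.log (a + b) := Real.log_le_log h' (by linarith)
  simp only [Real.negMulLog, neg_mul]
  nlinarith

lemma negMulLog_sum_le {s : Finset β} {f : β → ℝ} (hf : ∀ i ∈ s, 0 ≤ f i) :
    Real.negMulLog (∑ i ∈ s, f i) ≤ ∑ i ∈ s, Real.negMulLog (f i) := by
  induction s using Finset.cons_induction with
  | empty => simp
  | cons a s ha ih =>
    rw [Finset.sum_cons, Finset.sum_cons]
    calc Real.negMulLog (f a + ∑ i ∈ s, f i)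
        ≤ Real.negMulLog (f a) + Real.negMulLog (∑ i ∈ s, f i) :=
          negMulLog_add_le (hf a (Finset.mem_cons_self a s))
            (Finset.sum_nonneg fun i hi => hf i (Finset.mem_cons_of_mem hi))
      _ ≤ _ := by gcongr; exact ih fun i hi => hf i (Finset.mem_cons_of_mem hi)

end B1

section C1
variable {S α β : Type} [Fintype S] [Fintype α] [Fintype β]
open Classical in
lemma Hn_pmfMap_le (p : S → ℝ) (hp : ∀ s, 0 ≤ p s) (f : S → α) :
    Hn (pmfMap p f) ≤ Hn p := by
  unfold Hn pmfMap
  calc ∑ a, Real.negMulLog (∑ s, if f s = a then p s else 0)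
      ≤ ∑ a, ∑ s, Real.negMulLog (if f s = a then p s else 0) :=
        Finset.sum_le_sum fun a _ => negMulLog_sum_le fun s _ => by split <;> simp [hp s]
    _ = ∑ s, ∑ a, (if f s = a then Real.negMulLog (p s) else 0) := by
        rw [Finset.sum_comm]
        congr 1; funext s; congr 1; funext a; split <;> simp
    _ = ∑ s, Real.negMulLog (p s) := by simp

lemma Hn_le_log_card (p : α → ℝ) (hp : ∀ a, 0 ≤ p a) (hp1 : ∑ a, p a = 1) :
    Hn p ≤ Real.log (Fintype.card α) := by
  have hne : Nonempty α := by
    by_contra h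
    rw [not_nonempty_iff] at h
    simp [Finset.univ_eq_empty] at hp1
  have hcard : (0 : ℝ) < Fintype.card α := by
    have := Fintype.card_pos_iff.mpr hne; positivity
  have := gibbs p (fun _ => (Fintype.card α : ℝ)⁻¹) hp (fun _ => by positivity) hp1
    (by simp [Finset.sum_const, nsmul_eq_mul, Finset.card_univ,
      mul_inv_cancel₀ (ne_of_gt hcard)])
    (fun a h => absurd h (by positivity))
  calc Hn p ≤ ∑ a, -(p a * Real.log ((Fintype.card α : ℝ)⁻¹)) := this
    _ = Real.log (Fintype.card α) := by
        rw [Real.log_inv]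
        simp only [mul_neg, neg_neg, ← Finset.sum_mul, hp1, one_mul]

open Classical in
lemma Hn_pmfMap_inj (p : S → ℝ) (f : S → α) (hf : Function.Injective f) :
    Hn (pmfMap p f) = Hn p := by
  have hfs : ∀ s, pmfMap p f (f s) = p s := by
    intro s
    unfold pmfMap
    rw [Finset.sum_eq_single s]
    · simp
    · intro b _ hb
      have : ¬ f b = f s := fun h => hb (hf h)
      simp [this]
    · simp
  unfold Hn
  rw [← Finset.sum_subset (Finset.subset_univ (Finset.image f Finset.univ))
    (fun b _ hb => ?_), Finset.sum_image (fun x _ y _ h => hf h)]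
  · simp [hfs]
  · have : pmfMap p f b = 0 := by
      unfold pmfMap
      refine Finset.sum_eq_zero fun s _ => ?_
      have : ¬ f s = b := fun h => hb (by simp [← h])
      simp [this]
    simp [this]

lemma logsum (a b : α → ℝ) (ha : ∀ i, 0 ≤ a i) (hab : ∀ i, a i ≤ b i) :
    (∑ i, a i) * (Real.log (∑ i, a i) - Real.log (∑ i, b i))
      ≤ ∑ i, a i * (Real.log (a i) - Real.log (b i)) := by
  set A := ∑ i, a i with hA
  set B := ∑ i, b i with hB
  rcases eq_or_lt_of_le (Finset.sum_nonneg fun i _ => ha i) with h0 | hApos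
  · have : ∀ i ∈ Finset.univ, a i = 0 :=
      (Finset.sum_eq_zero_iff_of_nonneg (fun i _ => ha i)).1 h0.symm
    have hz : ∀ i : α, a i = 0 := fun i => this i (Finset.mem_univ i)
    have hz' : A = 0 := h0.symm
    simp [hz', hz]
  · have hBpos : 0 < B := lt_of_lt_of_le hApos (Finset.sum_le_sum fun i _ => hab i)
    have key : ∀ i, a i * (Real.log A - Real.log B) + (a i - A / B * b i)
        ≤ a i * (Real.log (a i) - Real.log (b i)) := by
      intro i
      rcases eq_or_lt_of_le (ha i) with h | h
      · have : 0 ≤ A / B * b i := by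
          have := le_trans (ha i) (hab i); positivity
        simp [← h]; linarith
      · have hbi : 0 < b i := lt_of_lt_of_le h (hab i)
        have hratio : 0 < b i * A / (a i * B) := by positivity
        have hlog := Real.log_le_sub_one_of_pos hratio
        have hlogeq : Real.log (b i * A / (a i * B))
            = Real.log (b i) + Real.log A - (Real.log (a i) + Real.log B) := by
          rw [Real.log_div (by positivity) (by positivity),
            Real.log_mul (ne_of_gt hbi) (ne_of_gt hApos),
            Real.log_mul (ne_of_gt h) (ne_of_gt hBpos)]
        have hfrac : a i * (b i * A / (a i * B)) = A / B * b i := by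
          field_simp
        nlinarith [mul_le_mul_of_nonneg_left hlog (le_of_lt h)]
    have hsum := Finset.sum_le_sum fun i (_ : i ∈ Finset.univ) => key i
    rw [Finset.sum_add_distrib, ← Finset.sum_mul, Finset.sum_sub_distrib,
      ← Finset.mul_sum] at hsum
    rw [← hA, ← hB] at hsum
    have : A - A / B * B = 0 := by field_simp; ring
    linarith
end C1

lemma negMulLog_prod {ι : Type} [DecidableEq ι] (s : Finset ι) (f : ι → ℝ) :
    Real.negMulLog (∏ i ∈ s, f i)
      = ∑ i ∈ s, (∏ j ∈ s.erase i, f j) * Real.negMulLog (f i) := by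
  induction s using Finset.cons_induction with
  | empty => simp
  | cons a s ha ih =>
    rw [Finset.prod_cons, Real.negMulLog_mul, ih, Finset.sum_cons]
    have h1 : (Finset.cons a s ha).erase a = s := by
      rw [Finset.erase_cons]
    congr 1
    · rw [h1]
    · rw [Finset.mul_sum]
      refine Finset.sum_congr rfl fun i hi => ?_
      have hia : i ≠ a := fun h => ha (h ▸ hi)
      have h2 : (Finset.cons a s ha).erase i = Finset.cons a (s.erase i)
          (fun h => ha (Finset.erase_subset i s h)) := by
        rw [Finset.erase_cons_of_ne _ hia.symm]
      rw [h2, Finset.prod_cons]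
      ring

section D1
variable {ι 𝒳 : Type} [Fintype ι] [DecidableEq ι] [Fintype 𝒳]

lemma sum_prod_single (h : ι → 𝒳 → ℝ) :
    ∑ s : ι → 𝒳, ∏ u, h u (s u) = ∏ u, ∑ x, h u x := by
  classical
  rw [Finset.prod_univ_sum, Fintype.piFinset_univ]

variable (p0 : 𝒳 → ℝ)

open Classical in
lemma pmfMap_eval (hp : ∀ x, 0 ≤ p0 x) (hp1 : ∑ x, p0 x = 1) (t : ι) :
    pmfMap (fun s : ι → 𝒳 => ∏ u, p0 (s u)) (fun s => s t) = p0 := by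
  funext x
  unfold pmfMap
  have key : ∀ s : ι → 𝒳, (if s t = x then ∏ u, p0 (s u) else 0)
      = ∏ u, (fun u ξ => if u = t then (if ξ = x then p0 ξ else 0) else p0 ξ) u (s u) := by
    intro s
    by_cases hst : s t = x
    · rw [if_pos hst]
      refine Finset.prod_congr rfl fun u _ => ?_
      by_cases hut : u = t
      · subst hut; simp [hst]
      · simp [hut]
    · rw [if_neg hst]
      refine (Finset.prod_eq_zero (Finset.mem_univ t) ?_).symm
      simp [hst]
  rw [Finset.sum_congr rfl fun s _ => key s,
    sum_prod_single (fun u ξ => if u = t then (if ξ = x then p0 ξ else 0) else p0 ξ)]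
  have : ∀ u : ι, (∑ ξ, (fun u ξ => if u = t then (if ξ = x then p0 ξ else 0) else p0 ξ) u ξ)
      = if u = t then p0 x else 1 := by
    intro u
    by_cases hut : u = t <;> simp [hut, hp1]
  rw [Finset.prod_congr rfl fun u _ => this u]
  simp

lemma mu_sum_one (hp1 : ∑ x, p0 x = 1) :
    ∑ s : ι → 𝒳, ∏ u, p0 (s u) = 1 := by
  rw [sum_prod_single]; simp [hp1]

lemma Hn_prod (hp : ∀ x, 0 ≤ p0 x) (hp1 : ∑ x, p0 x = 1) :
    Hn (fun s : ι → 𝒳 => ∏ u, p0 (s u)) = (Fintype.card ι : ℝ) * Hn p0 := by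
  classical
  unfold Hn
  have key : ∀ s : ι → 𝒳, Real.negMulLog (∏ u, p0 (s u))
      = ∑ t, (∏ u ∈ Finset.univ.erase t, p0 (s u)) * Real.negMulLog (p0 (s t)) :=
    fun s => negMulLog_prod Finset.univ (fun u => p0 (s u))
  rw [Finset.sum_congr rfl fun s _ => key s, Finset.sum_comm]
  have inner : ∀ t : ι, (∑ s : ι → 𝒳, (∏ u ∈ Finset.univ.erase t, p0 (s u))
      * Real.negMulLog (p0 (s t))) = Hn p0 := by
    intro t
    have reform : ∀ s : ι → 𝒳, (∏ u ∈ Finset.univ.erase t, p0 (s u)) * Real.negMulLog (p0 (s t))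
        = ∏ u, (fun u ξ => if u = t then Real.negMulLog (p0 ξ) else p0 ξ) u (s u) := by
      intro s
      rw [← Finset.mul_prod_erase Finset.univ _ (Finset.mem_univ t)]
      simp only [if_pos rfl]
      rw [mul_comm]
      congr 1
      refine Finset.prod_congr rfl fun u hu => ?_
      rw [if_neg (Finset.ne_of_mem_erase hu)]
    rw [Finset.sum_congr rfl fun s _ => reform s,
      sum_prod_single (fun u ξ => if u = t then Real.negMulLog (p0 ξ) else p0 ξ)]
    have : ∀ u : ι, (∑ ξ, (fun u ξ => if u = t then Real.negMulLog (p0 ξ) else p0 ξ) u ξ)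
        = if u = t then Hn p0 else 1 := by
      intro u; by_cases hut : u = t <;> simp [hut, hp1, Hn]
    rw [Finset.prod_congr rfl fun u _ => this u]
    simp
  rw [Finset.sum_congr rfl fun t _ => inner t, Finset.sum_const, Finset.card_univ,
    nsmul_eq_mul]
  simp [Hn]

end D1

section E1
variable {S α β 𝒳 𝒴 : Type} [Fintype S] [Fintype α] [Fintype β] [Fintype 𝒳] [Fintype 𝒴]
variable {ι : Type} [Fintype ι] [DecidableEq ι]
lemma Hn_eq_marg (p : S → ℝ) (f : S → α) :
    ∑ s, p s * (-Real.log (pmfMap p f (f s))) = Hn (pmfMap p f) := by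
  rw [← pmfMap_marg p f (fun c => -Real.log (pmfMap p f c))]
  unfold Hn
  refine Finset.sum_congr rfl fun c _ => ?_
  simp [Real.negMulLog]

lemma snd_marg (R : 𝒳 × 𝒴 → ℝ) (y : 𝒴) : pmfMap R Prod.snd y = ∑ x, R (x, y) := by
  classical
  unfold pmfMap
  rw [Fintype.sum_prod_type]
  refine Finset.sum_congr rfl fun x _ => ?_
  rw [Finset.sum_eq_single y] <;> simp +contextual

lemma G1 (P : (ι → 𝒳) × (ι → 𝒴) → ℝ) (hP : ∀ a, 0 ≤ P a) (hP1 : ∑ a, P a = 1) :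
    Hn P ≤ Hn (pmfMap P Prod.snd)
      + ∑ t, (Hn (pmfMap P (fun a => (a.1 t, a.2 t))) - Hn (pmfMap P (fun a => a.2 t))) := by
  classical
  set mY := pmfMap P Prod.snd with hmY
  set Pt : ι → 𝒳 × 𝒴 → ℝ := fun t => pmfMap P (fun a => (a.1 t, a.2 t)) with hPt
  set Qt : ι → 𝒴 → ℝ := fun t => pmfMap P (fun a => a.2 t) with hQt
  have hQtc : ∀ t, Qt t = pmfMap (Pt t) Prod.snd := by
    intro t
    have hco : (fun a : (ι → 𝒳) × (ι → 𝒴) => a.2 t)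
        = Prod.snd ∘ (fun a : (ι → 𝒳) × (ι → 𝒴) => (a.1 t, a.2 t)) := rfl
    show pmfMap P (fun a => a.2 t) = _
    rw [hco, pmfMap_comp]
  have hPt0 : ∀ t c, 0 ≤ Pt t c := fun t c => pmfMap_nonneg hP _ c
  have hQt0 : ∀ t y, 0 ≤ Qt t y := fun t y => pmfMap_nonneg hP _ y
  have hmY0 : ∀ y, 0 ≤ mY y := fun y => pmfMap_nonneg hP _ y
  have hPle : ∀ t (a : (ι → 𝒳) × (ι → 𝒴)), P a ≤ Pt t (a.1 t, a.2 t) :=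
    fun t a => le_pmfMap hP _ a
  have hPmY : ∀ a : (ι → 𝒳) × (ι → 𝒴), P a ≤ mY a.2 := fun a => le_pmfMap hP Prod.snd a
  have hQtPt : ∀ t (c : 𝒳 × 𝒴), Pt t c ≤ Qt t c.2 := by
    intro t c
    rw [hQtc t]
    exact le_pmfMap (fun c' => hPt0 t c') Prod.snd c
  have hQtsum : ∀ t y, ∑ x, Pt t (x, y) = Qt t y := by
    intro t y
    rw [hQtc t, snd_marg]
  set q : (ι → 𝒳) × (ι → 𝒴) → ℝ :=
    fun a => mY a.2 * ∏ t, Pt t (a.1 t, a.2 t) / Qt t (a.2 t) with hqdef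
  have hq0 : ∀ a, 0 ≤ q a := fun a =>
    mul_nonneg (hmY0 _) (Finset.prod_nonneg fun t _ => div_nonneg (hPt0 _ _) (hQt0 _ _))
  have hq1 : ∑ a, q a ≤ 1 := by
    rw [Fintype.sum_prod_type_right]
    have inner : ∀ y : ι → 𝒴, ∑ x : ι → 𝒳, q (x, y) ≤ mY y := by
      intro y
      have : ∑ x : ι → 𝒳, q (x, y) = mY y * ∑ x : ι → 𝒳, ∏ t, Pt t (x t, y t) / Qt t (y t) := by
        rw [Finset.mul_sum]
      rw [this, sum_prod_single (fun t ξ => Pt t (ξ, y t) / Qt t (y t))]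
      have hfac : ∀ t : ι, ∑ ξ, Pt t (ξ, y t) / Qt t (y t) ≤ 1 := by
        intro t
        rw [← Finset.sum_div, hQtsum t (y t)]
        exact div_self_le_one _
      calc mY y * ∏ t, ∑ ξ, Pt t (ξ, y t) / Qt t (y t)
          ≤ mY y * 1 := by
            refine mul_le_mul_of_nonneg_left ?_ (hmY0 y)
            exact Finset.prod_le_one
              (fun t _ => Finset.sum_nonneg fun ξ _ => div_nonneg (hPt0 _ _) (hQt0 _ _))
              (fun t _ => hfac t)
        _ = mY y := mul_one _
    calc ∑ y : ι → 𝒴, ∑ x : ι → 𝒳, q (x, y) ≤ ∑ y : ι → 𝒴, mY y :=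
          Finset.sum_le_sum fun y _ => inner y
      _ = ∑ a, P a := pmfMap_sum P Prod.snd
      _ = 1 := hP1
  have hsupp : ∀ a, q a = 0 → P a = 0 := by
    intro a hqa
    by_contra hPa
    have hPpos : 0 < P a := lt_of_le_of_ne (hP a) (Ne.symm hPa)
    have h1 : 0 < mY a.2 := lt_of_lt_of_le hPpos (hPmY a)
    have h2 : ∀ t, 0 < Pt t (a.1 t, a.2 t) := fun t => lt_of_lt_of_le hPpos (hPle t a)
    have h3 : ∀ t, 0 < Qt t (a.2 t) := fun t => lt_of_lt_of_le (h2 t) (hQtPt t _)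
    have : 0 < q a := mul_pos h1 (Finset.prod_pos fun t _ => div_pos (h2 t) (h3 t))
    rw [hqa] at this
    exact lt_irrefl 0 this
  have hgibbs := gibbs P q hP hq0 hP1 hq1 hsupp
  have key : ∀ a, -(P a * Real.log (q a))
      = P a * (-Real.log (mY a.2))
        + ∑ t, (P a * (-Real.log (Pt t (a.1 t, a.2 t))) - P a * (-Real.log (Qt t (a.2 t)))) := by
    intro a
    by_cases hPa : P a = 0
    · simp [hPa]
    · have hPpos : 0 < P a := lt_of_le_of_ne (hP a) (Ne.symm hPa)
      have h1 : 0 < mY a.2 := lt_of_lt_of_le hPpos (hPmY a)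
      have h2 : ∀ t, 0 < Pt t (a.1 t, a.2 t) := fun t => lt_of_lt_of_le hPpos (hPle t a)
      have h3 : ∀ t, 0 < Qt t (a.2 t) := fun t => lt_of_lt_of_le (h2 t) (hQtPt t _)
      have hlog : Real.log (q a) = Real.log (mY a.2)
          + ∑ t, (Real.log (Pt t (a.1 t, a.2 t)) - Real.log (Qt t (a.2 t))) := by
        rw [hqdef]
        rw [Real.log_mul (ne_of_gt h1)
          (ne_of_gt (Finset.prod_pos fun t _ => div_pos (h2 t) (h3 t)))]
        rw [Real.log_prod (fun t _ => ne_of_gt (div_pos (h2 t) (h3 t)))]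
        congr 1
        exact Finset.sum_congr rfl fun t _ =>
          Real.log_div (ne_of_gt (h2 t)) (ne_of_gt (h3 t))
      rw [hlog]
      have expand : ∑ t, (P a * (-Real.log (Pt t (a.1 t, a.2 t)))
            - P a * (-Real.log (Qt t (a.2 t))))
          = -(P a * ∑ t, (Real.log (Pt t (a.1 t, a.2 t)) - Real.log (Qt t (a.2 t)))) := by
        rw [Finset.mul_sum, ← Finset.sum_neg_distrib]
        exact Finset.sum_congr rfl fun t _ => by ring
      rw [expand]
      ring
  calc Hn P ≤ ∑ a, -(P a * Real.log (q a)) := hgibbs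
    _ = ∑ a, P a * (-Real.log (mY a.2))
        + ∑ t, (∑ a, P a * (-Real.log (Pt t (a.1 t, a.2 t)))
          - ∑ a, P a * (-Real.log (Qt t (a.2 t)))) := by
        rw [Finset.sum_congr rfl fun a _ => key a, Finset.sum_add_distrib]
        congr 1
        rw [Finset.sum_comm]
        exact Finset.sum_congr rfl fun t _ => Finset.sum_sub_distrib _ _
    _ = Hn mY + ∑ t, (Hn (Pt t) - Hn (Qt t)) := by
        congr 1
        · exact Hn_eq_marg P Prod.snd
        · exact Finset.sum_congr rfl fun t _ => by
            rw [Hn_eq_marg P (fun a => (a.1 t, a.2 t)), Hn_eq_marg P (fun a => a.2 t)]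

open Classical in
lemma fst_marg (R : 𝒳 × 𝒴 → ℝ) (x : 𝒳) : pmfMap R Prod.fst x = ∑ y, R (x, y) := by
  unfold pmfMap
  rw [Fintype.sum_prod_type_right]
  refine Finset.sum_congr rfl fun y _ => ?_
  rw [Finset.sum_eq_single x] <;> simp +contextual
end E1

section F1
variable {ι 𝒳 𝒴 : Type} [Fintype ι] [Fintype 𝒳] [Fintype 𝒴]
lemma Hn_eq_neg_sum {α : Type} [Fintype α] (p : α → ℝ) :
    Hn p = -∑ a, p a * Real.log (p a) := by
  unfold Hn
  rw [← Finset.sum_neg_distrib]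
  exact Finset.sum_congr rfl fun a _ => by simp [Real.negMulLog]

lemma concave_condEnt (P : ι → 𝒳 × 𝒴 → ℝ) (hP0 : ∀ t c, 0 ≤ P t c) (m : ℝ) (hm : 0 < m) :
    Hn (pmfMap (fun c => (1 / m) * ∑ t, P t c) Prod.snd)
        - Hn (fun c : 𝒳 × 𝒴 => (1 / m) * ∑ t, P t c)
      ≤ (1 / m) * ∑ t, (Hn (pmfMap (P t) Prod.snd) - Hn (P t)) := by
  classical
  set ν : 𝒳 × 𝒴 → ℝ := fun c => (1 / m) * ∑ t, P t c with hν
  set νY := pmfMap ν Prod.snd with hνY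
  set Qt : ι → 𝒴 → ℝ := fun t => pmfMap (P t) Prod.snd with hQt
  have hQty : ∀ t y, Qt t y = ∑ x, P t (x, y) := fun t y => snd_marg (P t) y
  have hνYy : ∀ y, νY y = (1 / m) * ∑ t, Qt t y := by
    intro y
    rw [hνY, snd_marg]
    simp only [hν]
    rw [← Finset.mul_sum, Finset.sum_comm]
    congr 1
    exact (Finset.sum_congr rfl fun t _ => (hQty t y).symm)
  have hPQ : ∀ t (c : 𝒳 × 𝒴), P t c ≤ Qt t c.2 := by
    intro t c
    rw [hQt]
    exact le_pmfMap (hP0 t) Prod.snd c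
  have key : ∀ c : 𝒳 × 𝒴, ν c * (Real.log (ν c) - Real.log (νY c.2))
      ≤ ∑ t, (1 / m) * (P t c * (Real.log (P t c) - Real.log (Qt t c.2))) := by
    intro c
    have hls := logsum (fun t => (1 / m) * P t c) (fun t => (1 / m) * Qt t c.2)
      (fun t => mul_nonneg (by positivity) (hP0 t c))
      (fun t => mul_le_mul_of_nonneg_left (hPQ t c) (by positivity))
    have e1 : ∑ t, (1 / m) * P t c = ν c := by
      show _ = 1 / m * ∑ t, P t c
      rw [Finset.mul_sum]
    have e2 : ∑ t, (1 / m) * Qt t c.2 = νY c.2 := by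
      rw [hνYy c.2, Finset.mul_sum]
    rw [e1, e2] at hls
    refine le_trans hls (le_of_eq (Finset.sum_congr rfl fun t _ => ?_))
    by_cases hp : P t c = 0
    · simp [hp]
    · have hppos : 0 < P t c := lt_of_le_of_ne (hP0 t c) (Ne.symm hp)
      have hqpos : 0 < Qt t c.2 := lt_of_lt_of_le hppos (hPQ t c)
      rw [Real.log_mul (by positivity) (ne_of_gt hppos),
        Real.log_mul (by positivity) (ne_of_gt hqpos)]
      ring
  have hsum := Finset.sum_le_sum fun (c : 𝒳 × 𝒴) (_ : c ∈ Finset.univ) => key c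
  have lhs_eq : ∑ c : 𝒳 × 𝒴, ν c * (Real.log (ν c) - Real.log (νY c.2))
      = -Hn ν + Hn νY := by
    have m1 : ∑ c : 𝒳 × 𝒴, ν c * Real.log (νY c.2)
        = ∑ y, νY y * Real.log (νY y) :=
      (pmfMap_marg ν Prod.snd (fun y => Real.log (νY y))).symm
    simp only [mul_sub]
    rw [Finset.sum_sub_distrib, m1, Hn_eq_neg_sum, Hn_eq_neg_sum]
    ring
  have rhs_eq : ∑ c : 𝒳 × 𝒴, ∑ t, (1 / m) * (P t c * (Real.log (P t c) - Real.log (Qt t c.2)))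
      = (1 / m) * ∑ t, (-Hn (P t) + Hn (Qt t)) := by
    rw [Finset.sum_comm, Finset.mul_sum]
    refine Finset.sum_congr rfl fun t _ => ?_
    rw [← Finset.mul_sum]
    congr 1
    have m2 : ∑ c : 𝒳 × 𝒴, P t c * Real.log (Qt t c.2)
        = ∑ y, Qt t y * Real.log (Qt t y) :=
      (pmfMap_marg (P t) Prod.snd (fun y => Real.log (Qt t y))).symm
    simp only [mul_sub]
    rw [Finset.sum_sub_distrib, m2, Hn_eq_neg_sum, Hn_eq_neg_sum]
    ring
  rw [lhs_eq, rhs_eq] at hsum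
  have : (1 / m) * ∑ t, (-Hn (P t) + Hn (Qt t))
      = (1 / m) * ∑ t, (Hn (Qt t) - Hn (P t)) := by
    congr 1
    exact Finset.sum_congr rfl fun t _ => by ring
  rw [this] at hsum
  linarith
end F1

lemma core {𝒳 B T : Type} [Fintype 𝒳] [Fintype B] [Fintype T] (p0 : 𝒳 → ℝ)
    (hp : ∀ x, 0 ≤ p0 x) (hp1 : ∑ x, p0 x = 1) (n : ℕ) (hn : 0 < n)
    (e : (Fin n → 𝒳) → T) (d : T → Fin n → B) :
    pmfMap (fun c : 𝒳 × B => (1 / (n : ℝ)) * ∑ t,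
        pmfMap (fun s : Fin n → 𝒳 => ∏ u, p0 (s u)) (fun s => (s t, d (e s) t)) c)
        Prod.fst = p0
    ∧ Hn (pmfMap (fun c : 𝒳 × B => (1 / (n : ℝ)) * ∑ t,
          pmfMap (fun s : Fin n → 𝒳 => ∏ u, p0 (s u)) (fun s => (s t, d (e s) t)) c)
          Prod.fst)
      + Hn (pmfMap (fun c : 𝒳 × B => (1 / (n : ℝ)) * ∑ t,
          pmfMap (fun s : Fin n → 𝒳 => ∏ u, p0 (s u)) (fun s => (s t, d (e s) t)) c)
          Prod.snd)
      - Hn (fun c : 𝒳 × B => (1 / (n : ℝ)) * ∑ t,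
          pmfMap (fun s : Fin n → 𝒳 => ∏ u, p0 (s u)) (fun s => (s t, d (e s) t)) c)
      ≤ Real.log (Fintype.card T) / n := by
  classical
  set μ : (Fin n → 𝒳) → ℝ := fun s => ∏ u, p0 (s u) with hμ
  have hμ0 : ∀ s, 0 ≤ μ s := fun s => Finset.prod_nonneg fun u _ => hp (s u)
  have hμ1 : ∑ s, μ s = 1 := mu_sum_one p0 hp1
  set g : (Fin n → 𝒳) → (Fin n → B) := fun s => d (e s) with hg
  set Pt : Fin n → 𝒳 × B → ℝ := fun t => pmfMap μ (fun s => (s t, g s t)) with hPtdef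
  have hPt0 : ∀ t c, 0 ≤ Pt t c := fun t c => pmfMap_nonneg hμ0 _ c
  set ν : 𝒳 × B → ℝ := fun c => (1 / (n : ℝ)) * ∑ t, Pt t c with hνdef
  -- the big joint distribution
  set P : (Fin n → 𝒳) × (Fin n → B) → ℝ := pmfMap μ (fun s => (s, g s)) with hPdef
  have hP0 : ∀ a, 0 ≤ P a := fun a => pmfMap_nonneg hμ0 _ a
  have hP1 : ∑ a, P a = 1 := by rw [hPdef, pmfMap_sum, hμ1]
  -- identifications
  have idY : pmfMap P Prod.snd = pmfMap μ g := by
    rw [hPdef, ← pmfMap_comp μ (fun s => (s, g s)) Prod.snd]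
    rfl
  have idPt : ∀ t, pmfMap P (fun a => (a.1 t, a.2 t)) = Pt t := by
    intro t
    rw [hPdef, ← pmfMap_comp μ (fun s => (s, g s)) (fun a => (a.1 t, a.2 t))]
    rfl
  have idQt : ∀ t, pmfMap P (fun a => a.2 t) = pmfMap (Pt t) Prod.snd := by
    intro t
    rw [← idPt t, ← pmfMap_comp P (fun a => (a.1 t, a.2 t)) Prod.snd]
    rfl
  have idHnP : Hn P = (n : ℝ) * Hn p0 := by
    rw [hPdef, Hn_pmfMap_inj μ _ (fun s₁ s₂ h => congrArg Prod.fst h), hμ]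
    rw [Hn_prod p0 hp hp1]
    simp
  -- rate bound on H(Y^n)
  have hHY : Hn (pmfMap μ g) ≤ Real.log (Fintype.card T) := by
    have : pmfMap μ g = pmfMap (pmfMap μ e) d := by
      rw [← pmfMap_comp μ e d]; rfl
    rw [this]
    calc Hn (pmfMap (pmfMap μ e) d) ≤ Hn (pmfMap μ e) :=
          Hn_pmfMap_le _ (fun s => pmfMap_nonneg hμ0 e s) d
      _ ≤ Real.log (Fintype.card T) :=
          Hn_le_log_card _ (fun s => pmfMap_nonneg hμ0 e s) (by rw [pmfMap_sum, hμ1])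
  -- G1 chain
  have hG1 := G1 P hP0 hP1
  rw [idY, idHnP] at hG1
  have hG1' : (n : ℝ) * Hn p0 ≤ Real.log (Fintype.card T)
      + ∑ t, (Hn (Pt t) - Hn (pmfMap (Pt t) Prod.snd)) := by
    have : ∑ t, (Hn (pmfMap P fun a => (a.1 t, a.2 t)) - Hn (pmfMap P fun a => a.2 t))
        = ∑ t, (Hn (Pt t) - Hn (pmfMap (Pt t) Prod.snd)) :=
      Finset.sum_congr rfl fun t _ => by rw [idPt t, idQt t]
    rw [this] at hG1
    linarith
  -- marginal of ν on X is p0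
  have hmargX : pmfMap ν Prod.fst = p0 := by
    funext x
    rw [fst_marg]
    have : ∀ b, ν (x, b) = (1 / (n : ℝ)) * ∑ t, Pt t (x, b) := fun b => rfl
    rw [Finset.sum_congr rfl fun b _ => this b, ← Finset.mul_sum, Finset.sum_comm]
    have inner : ∀ t, ∑ b, Pt t (x, b) = p0 x := by
      intro t
      have : ∑ b, Pt t (x, b) = pmfMap (Pt t) Prod.fst x := (fst_marg _ x).symm
      rw [this, hPtdef, ← pmfMap_comp μ (fun s => (s t, g s t)) Prod.fst]
      have : (Prod.fst ∘ fun s : Fin n → 𝒳 => (s t, g s t)) = fun s => s t := rfl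
      rw [this, hμ, pmfMap_eval p0 hp hp1 t]
    rw [Finset.sum_congr rfl fun t _ => inner t, Finset.sum_const, Finset.card_univ,
      nsmul_eq_mul]
    simp only [Fintype.card_fin]
    have hnne : (n : ℝ) ≠ 0 := Nat.cast_ne_zero.mpr (Nat.pos_iff_ne_zero.mp hn)
    field_simp
  -- convexity
  have hnpos : (0 : ℝ) < n := Nat.cast_pos.mpr hn
  have hconv := concave_condEnt Pt hPt0 (n : ℝ) hnpos
  -- combine
  constructor
  · exact hmargX
  · have hfin : (1 / (n : ℝ)) * ∑ t, (Hn (pmfMap (Pt t) Prod.snd) - Hn (Pt t))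
        ≤ (1 / (n : ℝ)) * (Real.log (Fintype.card T) - (n : ℝ) * Hn p0) := by
      refine mul_le_mul_of_nonneg_left ?_ (by positivity)
      have : ∑ t, (Hn (pmfMap (Pt t) Prod.snd) - Hn (Pt t))
          = -∑ t, (Hn (Pt t) - Hn (pmfMap (Pt t) Prod.snd)) := by
        rw [← Finset.sum_neg_distrib]
        exact Finset.sum_congr rfl fun t _ => by ring
      rw [this]
      linarith
    have hmarg' : Hn (pmfMap ν Prod.fst) = Hn p0 := by rw [hmargX]
    have hnne : (n : ℝ) ≠ 0 := ne_of_gt hnpos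
    have : Hn (pmfMap ν Prod.snd) - Hn ν
        ≤ (1 / (n : ℝ)) * (Real.log (Fintype.card T) - (n : ℝ) * Hn p0) :=
      le_trans hconv hfin
    have hfs : (1 / (n : ℝ)) * (Real.log (Fintype.card T) - (n : ℝ) * Hn p0)
        = Real.log (Fintype.card T) / n - Hn p0 := by field_simp
    rw [hfs] at this
    rw [hmarg']
    linarith

end OB

namespace OB
set_option linter.unusedSectionVars false
open Real Finset Filter

section G1s
variable {S α β A B' : Type} [Fintype S] [Fintype α] [Fintype β] [Fintype A] [Fintype B']

lemma H2_eq (p : α → ℝ) : H2 p = Hn p / Real.log 2 := by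
  unfold H2 Hn
  rw [Finset.sum_div]
  refine Finset.sum_congr rfl fun a _ => ?_
  rw [Real.logb, Real.negMulLog]
  ring

noncomputable def MIdn {α β : Type} [Fintype α] [Fintype β] (P : α × β → ℝ) : ℝ :=
  Hn (pmfMap P Prod.fst) + Hn (pmfMap P Prod.snd) - Hn P

lemma MI_eq_MIdn (p : S → ℝ) (f : S → α) (g : S → β) :
    MI p f g = MIdn (pmfMap p fun s => (f s, g s)) / Real.log 2 := by
  unfold MI MIdn
  rw [H2_eq, H2_eq, H2_eq]
  have h1 : pmfMap (pmfMap p fun s => (f s, g s)) Prod.fst = pmfMap p f := by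
    rw [← pmfMap_comp p (fun s => (f s, g s)) Prod.fst]; rfl
  have h2 : pmfMap (pmfMap p fun s => (f s, g s)) Prod.snd = pmfMap p g := by
    rw [← pmfMap_comp p (fun s => (f s, g s)) Prod.snd]; rfl
  rw [h1, h2]
  ring

lemma continuous_Hn : Continuous (Hn (α := α)) :=
  continuous_finset_sum _ fun a _ => Real.continuous_negMulLog.comp (continuous_apply a)

open Classical in
lemma continuous_pmfMap (f : S → α) : Continuous fun p : S → ℝ => pmfMap p f := by
  refine continuous_pi fun a => continuous_finset_sum _ fun s _ => ?_
  by_cases h : f s = a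
  · simp only [if_pos h]; exact continuous_apply s
  · simp only [if_neg h]; exact continuous_const

lemma continuous_MIdn : Continuous (MIdn (α := α) (β := β)) := by
  unfold MIdn
  exact ((continuous_Hn.comp (continuous_pmfMap Prod.fst)).add
    (continuous_Hn.comp (continuous_pmfMap Prod.snd))).sub continuous_Hn

-- tv and jointType lemmas
open Classical in
lemma tv_map_le (u v : A → ℝ) (φ : A → B') : tv (pmfMap u φ) (pmfMap v φ) ≤ tv u v := by
  unfold tv pmfMap
  have step : ∀ b, |∑ a, (if φ a = b then u a else 0) - ∑ a, (if φ a = b then v a else 0)|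
      ≤ ∑ a, (if φ a = b then |u a - v a| else 0) := by
    intro b
    rw [← Finset.sum_sub_distrib]
    refine le_trans (Finset.abs_sum_le_sum_abs _ _) (le_of_eq ?_)
    refine Finset.sum_congr rfl fun a _ => ?_
    split <;> simp
  have h2 : ∑ b, ∑ a, (if φ a = b then |u a - v a| else 0) = ∑ a, |u a - v a| := by
    rw [Finset.sum_comm]; simp
  have h3 := Finset.sum_le_sum fun b (_ : b ∈ Finset.univ) => step b
  rw [h2] at h3
  linarith

lemma abs_sub_le_two_tv (u v : A → ℝ) (c : A) : |u c - v c| ≤ 2 * tv u v := by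
  unfold tv
  have := Finset.single_le_sum (f := fun a => |u a - v a|) (fun a _ => abs_nonneg _)
    (Finset.mem_univ c)
  linarith

lemma tv_le_one (u v : A → ℝ) (hu : ∀ a, 0 ≤ u a) (hv : ∀ a, 0 ≤ v a)
    (hu1 : ∑ a, u a ≤ 1) (hv1 : ∑ a, v a ≤ 1) : tv u v ≤ 1 := by
  unfold tv
  have : ∀ a, |u a - v a| ≤ u a + v a := fun a => by
    rw [abs_sub_le_iff]; constructor <;> nlinarith [hu a, hv a]
  have h := Finset.sum_le_sum fun a (_ : a ∈ Finset.univ) => this a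
  rw [Finset.sum_add_distrib] at h
  linarith

open Classical in
lemma jointType_nonneg (n : ℕ) (s : Fin n → A) (a : A) : 0 ≤ jointType n s a := by
  unfold jointType; positivity

open Classical in
lemma jointType_sum (n : ℕ) (hn : 0 < n) (s : Fin n → A) : ∑ a, jointType n s a = 1 := by
  unfold jointType
  rw [← Finset.sum_div]
  have : ∑ a : A, ((Finset.univ.filter fun t => s t = a).card : ℝ)
      = ((Finset.univ : Finset (Fin n)).card : ℝ) := by
    rw [Finset.card_eq_sum_card_fiberwise (f := s) (t := Finset.univ) (fun x _ => Finset.mem_univ _)]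
    push_cast; rfl
  rw [this]
  simp
  omega

open Classical in
lemma jointType_map (n : ℕ) (s : Fin n → A) (φ : A → B') :
    jointType n (fun t => φ (s t)) = pmfMap (jointType n s) φ := by
  funext b
  unfold jointType pmfMap
  have : ∑ a : A, (if φ a = b then ((Finset.univ.filter fun t => s t = a).card : ℝ) / n else 0)
      = (∑ a ∈ Finset.univ.filter (fun a : A => φ a = b),
          ((Finset.univ.filter fun t => s t = a).card : ℝ)) / n := by
    rw [Finset.sum_filter, Finset.sum_div]
    refine Finset.sum_congr rfl fun a _ => ?_
    split <;> simp
  rw [this]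
  congr 1
  have hpart := Finset.card_eq_sum_card_fiberwise (f := s)
    (s := Finset.univ.filter fun t => φ (s t) = b)
    (t := Finset.univ.filter fun a : A => φ a = b)
    (fun x hx => by simp at hx ⊢; exact hx)
  rw [hpart]
  push_cast
  refine Finset.sum_congr rfl fun a ha => ?_
  norm_cast
  congr 1
  ext t
  simp at ha ⊢
  intro h
  rw [h]
  exact ha

open Classical in
lemma probOf_nonneg (μ : A → ℝ) (hμ : ∀ a, 0 ≤ μ a) (E : A → Prop) : 0 ≤ probOf μ E :=
  Finset.sum_nonneg fun a _ => by split <;> simp [hμ a]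

end G1s
end OB

namespace OB
set_option linter.unusedSectionVars false
open Real Finset Filter

section G2s
variable {𝒳 A : Type} [Fintype 𝒳] [Fintype A]

open Classical in
lemma nu_eq_expect (n : ℕ) (μ : (Fin n → 𝒳) → ℝ)
    (w : (Fin n → 𝒳) → Fin n → A) (c : A) :
    (1 / (n : ℝ)) * ∑ t, pmfMap μ (fun s => w s t) c
      = ∑ s, μ s * jointType n (fun t => w s t) c := by
  unfold pmfMap jointType
  have hcard : ∀ s : Fin n → 𝒳, ((Finset.univ.filter fun t => w s t = c).card : ℝ)
      = ∑ t, (if w s t = c then (1 : ℝ) else 0) :=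
    fun s => Finset.natCast_card_filter _ _
  have rhs : ∀ s : Fin n → 𝒳, μ s * (((Finset.univ.filter fun t => w s t = c).card : ℝ) / n)
      = (1 / (n : ℝ)) * ∑ t, (if w s t = c then μ s else 0) := by
    intro s
    rw [hcard s, Finset.mul_sum, Finset.sum_div, Finset.mul_sum]
    refine Finset.sum_congr rfl fun t _ => ?_
    split <;> ring
  rw [Finset.sum_congr rfl fun s _ => rhs s, ← Finset.mul_sum, Finset.sum_comm]

lemma log_msgCount_le (R : ℝ) (hR : 0 ≤ R) (n : ℕ) :
    Real.log (msgCount n R) ≤ ((n : ℝ) * R + 1) * Real.log 2 := by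
  unfold msgCount
  have hx : (0 : ℝ) < (2 : ℝ) ^ ((n : ℝ) * R) := Real.rpow_pos_of_pos (by norm_num) _
  have h1 : (1 : ℝ) ≤ (2 : ℝ) ^ ((n : ℝ) * R) := by
    have := Real.rpow_le_rpow_of_exponent_le (x := 2) (by norm_num)
      (show (0 : ℝ) ≤ (n : ℝ) * R by positivity)
    simpa using this
  have hceil : ((⌈(2 : ℝ) ^ ((n : ℝ) * R)⌉₊ : ℕ) : ℝ) < (2 : ℝ) ^ ((n : ℝ) * R) + 1 :=
    Nat.ceil_lt_add_one (le_of_lt hx)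
  have hle : ((⌈(2 : ℝ) ^ ((n : ℝ) * R)⌉₊ : ℕ) : ℝ) ≤ (2 : ℝ) ^ ((n : ℝ) * R + 1) := by
    rw [Real.rpow_add (by norm_num), Real.rpow_one]
    linarith
  have hpos : (0 : ℝ) < ((⌈(2 : ℝ) ^ ((n : ℝ) * R)⌉₊ : ℕ) : ℝ) := by
    have : 1 ≤ ⌈(2 : ℝ) ^ ((n : ℝ) * R)⌉₊ := Nat.one_le_ceil_iff.mpr hx
    exact_mod_cast Nat.lt_of_lt_of_le Nat.zero_lt_one this
  calc Real.log _ ≤ Real.log ((2 : ℝ) ^ ((n : ℝ) * R + 1)) := Real.log_le_log hpos hle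
    _ = ((n : ℝ) * R + 1) * Real.log 2 := Real.log_rpow (by norm_num) _

end G2s
end OB

namespace OB
set_option linter.unusedSectionVars false
open Real Finset Filter

open Classical in
lemma rate_bound {𝒳 𝒴 𝒵 B : Type} [Fintype 𝒳] [Fintype 𝒴] [Fintype 𝒵] [Fintype B]
    (p0 : 𝒳 → ℝ) (hp0 : IsPMF p0) (q : 𝒳 → 𝒴 × 𝒵 → ℝ) (hq : ∀ x, IsPMF (q x))
    (ρ : 𝒴 × 𝒵 → B) (R : ℝ) (hR : 0 ≤ R)
    (T : ℕ → Type) [inst : ∀ n, Fintype (T n)]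
    (e : (n : ℕ) → (Fin n → 𝒳) → T n) (d : (n : ℕ) → T n → Fin n → B)
    (hcard : ∀ n : ℕ, 1 ≤ n →
      Real.log (Fintype.card (T n)) ≤ ((n : ℝ) * R + 2) * Real.log 2)
    (w : (n : ℕ) → (Fin n → 𝒳) → Fin n → 𝒴 × 𝒵)
    (hfac : ∀ n xs t, d n (e n xs) t = ρ (w n xs t))
    (htv : ∀ ε > 0, Tendsto (fun n => probOf (fun xs : Fin n → 𝒳 => ∏ t, p0 (xs t))
      fun xs => ε ≤ tv (jointType n fun t => (xs t, w n xs t))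
        (fun a : 𝒳 × (𝒴 × 𝒵) => p0 a.1 * q a.1 a.2)) atTop (nhds 0)) :
    MIdn (pmfMap (fun a : 𝒳 × (𝒴 × 𝒵) => p0 a.1 * q a.1 a.2)
      (fun c => (c.1, ρ c.2))) ≤ R * Real.log 2 := by
  obtain ⟨hp0n, hp0s⟩ := hp0
  set tgt : 𝒳 × (𝒴 × 𝒵) → ℝ := fun a => p0 a.1 * q a.1 a.2 with htgt
  have htgt0 : ∀ a, 0 ≤ tgt a := fun a => mul_nonneg (hp0n a.1) ((hq a.1).1 a.2)
  have htgt1 : ∑ a, tgt a = 1 := by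
    rw [Fintype.sum_prod_type]
    have : ∀ x, ∑ yz : 𝒴 × 𝒵, tgt (x, yz) = p0 x := by
      intro x
      simp only [htgt]
      rw [← Finset.mul_sum, (hq x).2, mul_one]
    rw [Finset.sum_congr rfl fun x _ => this x, hp0s]
  set tgtB : 𝒳 × B → ℝ := pmfMap tgt (fun c => (c.1, ρ c.2)) with htgtB
  set ν : (n : ℕ) → 𝒳 × B → ℝ := fun n => fun c => (1 / (n : ℝ)) * ∑ t,
    pmfMap (fun s : Fin n → 𝒳 => ∏ u, p0 (s u)) (fun s => (s t, d n (e n s) t)) c with hν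
  -- per-n bound from core
  have hb : ∀ n : ℕ, 1 ≤ n → MIdn (ν n) ≤ R * Real.log 2 + 2 * Real.log 2 / n := by
    intro n hn
    have hnpos : (0 : ℝ) < n := by exact_mod_cast hn
    have h2 := (core p0 hp0n hp0s n hn (e n) (d n)).2
    have hc := hcard n hn
    have : Real.log (Fintype.card (T n)) / n ≤ ((n : ℝ) * R + 2) * Real.log 2 / n := by
      gcongr
    have heq : ((n : ℝ) * R + 2) * Real.log 2 / n = R * Real.log 2 + 2 * Real.log 2 / n := by
      field_simp
    calc MIdn (ν n) ≤ Real.log (Fintype.card (T n)) / n := h2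
      _ ≤ _ := by rw [← heq] at *; exact this
  -- pointwise convergence of ν n to tgtB
  have hest : ∀ n : ℕ, 1 ≤ n → ∀ ε > 0, ∀ c : 𝒳 × B,
      |ν n c - tgtB c| ≤ 2 * ε + 2 * probOf (fun xs : Fin n → 𝒳 => ∏ t, p0 (xs t))
        (fun xs => ε ≤ tv (jointType n fun t => (xs t, w n xs t)) tgt) := by
    intro n hn ε hε c
    set μ : (Fin n → 𝒳) → ℝ := fun s => ∏ u, p0 (s u) with hμ
    have hμ0 : ∀ s, 0 ≤ μ s := fun s => Finset.prod_nonneg fun u _ => hp0n (s u)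
    have hμ1 : ∑ s, μ s = 1 := mu_sum_one p0 hp0s
    have hψ : ∀ s : Fin n → 𝒳, (fun t => (s t, d n (e n s) t))
        = fun t => ((fun a : 𝒳 × (𝒴 × 𝒵) => (a.1, ρ a.2)) (s t, w n s t)) := by
      intro s; funext t; simp [hfac n s t]
    have hexp : ν n c = ∑ s, μ s * pmfMap (jointType n (fun t => (s t, w n s t)))
        (fun a : 𝒳 × (𝒴 × 𝒵) => (a.1, ρ a.2)) c := by
      have hνc : ν n c = (1 / (n : ℝ)) * ∑ t,
          pmfMap μ (fun s => (s t, d n (e n s) t)) c := rfl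
      have hne := nu_eq_expect n μ (fun s t => (s t, d n (e n s) t)) c
      rw [hνc, hne]
      refine Finset.sum_congr rfl fun s _ => ?_
      rw [hψ s, jointType_map n (fun t => (s t, w n s t))
        (fun a : 𝒳 × (𝒴 × 𝒵) => (a.1, ρ a.2))]
    have htgtBs : tgtB c = ∑ s, μ s * tgtB c := by
      rw [← Finset.sum_mul, hμ1, one_mul]
    rw [hexp, htgtBs, ← Finset.sum_sub_distrib]
    have hjt1 : ∀ s : Fin n → 𝒳, ∑ a, jointType n (fun t => (s t, w n s t)) a = 1 :=
      fun s => jointType_sum n (by omega) _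
    have perbound : ∀ s : Fin n → 𝒳,
        |μ s * pmfMap (jointType n (fun t => (s t, w n s t)))
            (fun a : 𝒳 × (𝒴 × 𝒵) => (a.1, ρ a.2)) c - μ s * tgtB c|
        ≤ μ s * (2 * ε + 2 * (if ε ≤ tv (jointType n fun t => (s t, w n s t)) tgt
            then (1 : ℝ) else 0)) := by
      intro s
      rw [← mul_sub, abs_mul, abs_of_nonneg (hμ0 s)]
      refine mul_le_mul_of_nonneg_left ?_ (hμ0 s)
      set jt := jointType n (fun t => (s t, w n s t)) with hjt
      have h2tv : |pmfMap jt (fun a : 𝒳 × (𝒴 × 𝒵) => (a.1, ρ a.2)) c - tgtB c|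
          ≤ 2 * tv jt tgt := by
        calc _ ≤ 2 * tv (pmfMap jt (fun a : 𝒳 × (𝒴 × 𝒵) => (a.1, ρ a.2))) tgtB :=
              abs_sub_le_two_tv _ _ c
          _ ≤ 2 * tv jt tgt := by
              rw [htgtB]
              have := tv_map_le jt tgt (fun a : 𝒳 × (𝒴 × 𝒵) => (a.1, ρ a.2))
              linarith
      by_cases hcase : ε ≤ tv jt tgt
      · have htvle : tv jt tgt ≤ 1 := tv_le_one _ _ (fun a => jointType_nonneg n _ a)
          htgt0 (le_of_eq (hjt1 s)) (le_of_eq htgt1)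
        rw [if_pos hcase]
        nlinarith
      · rw [if_neg hcase]
        push_neg at hcase
        have htv0 : 0 ≤ tv jt tgt := by
          unfold tv
          have : 0 ≤ ∑ a, |jt a - tgt a| := Finset.sum_nonneg fun a _ => abs_nonneg _
          linarith
        nlinarith
    calc |∑ s, (μ s * pmfMap (jointType n (fun t => (s t, w n s t)))
            (fun a : 𝒳 × (𝒴 × 𝒵) => (a.1, ρ a.2)) c - μ s * tgtB c)|
        ≤ ∑ s, |μ s * pmfMap (jointType n (fun t => (s t, w n s t)))
            (fun a : 𝒳 × (𝒴 × 𝒵) => (a.1, ρ a.2)) c - μ s * tgtB c| :=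
          Finset.abs_sum_le_sum_abs _ _
      _ ≤ ∑ s, μ s * (2 * ε + 2 * (if ε ≤ tv (jointType n fun t => (s t, w n s t)) tgt
            then (1 : ℝ) else 0)) := Finset.sum_le_sum fun s _ => perbound s
      _ = 2 * ε + 2 * probOf μ (fun xs => ε ≤ tv (jointType n fun t => (xs t, w n xs t)) tgt) := by
          unfold probOf
          rw [Finset.sum_congr rfl (fun s (_ : s ∈ Finset.univ) => mul_add (μ s) _ _),
            Finset.sum_add_distrib]
          congr 1
          · rw [← Finset.sum_mul, hμ1, one_mul]
          · rw [Finset.mul_sum]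
            refine Finset.sum_congr rfl fun s _ => ?_
            split <;> ring
  have hpt : ∀ c : 𝒳 × B, Tendsto (fun n => ν n c) atTop (nhds (tgtB c)) := by
    intro c
    rw [Metric.tendsto_atTop]
    intro δ hδ
    have h8 : (0 : ℝ) < δ / 8 := by linarith
    have hev := (htv (δ / 8) h8).eventually (gt_mem_nhds h8)
    obtain ⟨N, hN⟩ := (hev.and (eventually_ge_atTop 1)).exists_forall_of_atTop
    refine ⟨N, fun n hn => ?_⟩
    obtain ⟨hprob, hn1⟩ := hN n hn
    have hprob0 : 0 ≤ probOf (fun xs : Fin n → 𝒳 => ∏ t, p0 (xs t))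
        (fun xs => δ / 8 ≤ tv (jointType n fun t => (xs t, w n xs t)) tgt) :=
      probOf_nonneg _ (fun s => Finset.prod_nonneg fun u _ => hp0n (s u)) _
    have := hest n hn1 (δ / 8) h8 c
    rw [Real.dist_eq]
    calc |ν n c - tgtB c| ≤ 2 * (δ / 8) + 2 * _ := this
      _ < δ := by linarith
  -- limit
  have htendν : Tendsto (fun n => ν n) atTop (nhds tgtB) := tendsto_pi_nhds.mpr hpt
  have htendMI : Tendsto (fun n => MIdn (ν n)) atTop (nhds (MIdn tgtB)) :=
    (continuous_MIdn.tendsto tgtB).comp htendν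
  have htendg : Tendsto (fun n : ℕ => R * Real.log 2 + 2 * Real.log 2 / n) atTop
      (nhds (R * Real.log 2)) := by
    have h1 : Tendsto (fun n : ℕ => 2 * Real.log 2 / n) atTop (nhds 0) :=
      Tendsto.div_atTop tendsto_const_nhds tendsto_natCast_atTop_atTop
    have h2 : Tendsto (fun n : ℕ => R * Real.log 2 + 2 * Real.log 2 / n) atTop
        (nhds (R * Real.log 2 + 0)) := Tendsto.add tendsto_const_nhds h1
    simpa using h2
  exact le_of_tendsto_of_tendsto htendMI htendg
    (Filter.eventually_atTop.mpr ⟨1, fun n hn => hb n hn⟩)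

end OB

namespace OB
open Real Finset Filter

lemma cont_MI {𝒳 𝒴 𝒵 α β : Type} [Fintype 𝒳] [Fintype 𝒴] [Fintype 𝒵] [Fintype α] [Fintype β]
    (p0 : 𝒳 → ℝ) (f : 𝒳 × (𝒴 × 𝒵) → α) (g : 𝒳 × (𝒴 × 𝒵) → β) :
    Continuous (fun q' : 𝒳 → 𝒴 × 𝒵 → ℝ =>
      MI (fun a : 𝒳 × (𝒴 × 𝒵) => p0 a.1 * q' a.1 a.2) f g) := by
  have heq : (fun q' : 𝒳 → 𝒴 × 𝒵 → ℝ =>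
      MI (fun a : 𝒳 × (𝒴 × 𝒵) => p0 a.1 * q' a.1 a.2) f g)
      = fun q' : 𝒳 → 𝒴 × 𝒵 → ℝ =>
        MIdn (pmfMap (fun a : 𝒳 × (𝒴 × 𝒵) => p0 a.1 * q' a.1 a.2)
          (fun s => (f s, g s))) / Real.log 2 :=
    funext fun q' => MI_eq_MIdn _ f g
  rw [heq]
  refine Continuous.div_const ?_ _
  refine continuous_MIdn.comp ?_
  refine (continuous_pmfMap _).comp ?_
  refine continuous_pi fun a => ?_
  exact continuous_const.mul ((continuous_apply a.2).comp (continuous_apply a.1))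

end OB

open OB in
theorem broadcast_outer_bound_aux {𝒳 𝒴 𝒵 : Type} [Fintype 𝒳] [Fintype 𝒴] [Fintype 𝒵]
    (p0 : 𝒳 → ℝ) (hp0 : IsPMF p0) (R1 R2 : ℝ) (q : 𝒳 → 𝒴 × 𝒵 → ℝ)
    (h : (R1, R2, q) ∈ broadcastCapacity p0) :
    MI (fun a : 𝒳 × 𝒴 × 𝒵 => p0 a.1 * q a.1 a.2) (fun a => a.1) (fun a => a.2.1) ≤ R1 ∧
    MI (fun a : 𝒳 × 𝒴 × 𝒵 => p0 a.1 * q a.1 a.2) (fun a => a.1) (fun a => a.2.2) ≤ R2 ∧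
    MI (fun a : 𝒳 × 𝒴 × 𝒵 => p0 a.1 * q a.1 a.2) (fun a => a.1) (fun a => a.2)
      ≤ R1 + R2 := by
  classical
  have hlog2 : (0 : ℝ) < Real.log 2 := Real.log_pos (by norm_num)
  set C : Set (ℝ × ℝ × (𝒳 → 𝒴 × 𝒵 → ℝ)) := {v |
    MI (fun a : 𝒳 × 𝒴 × 𝒵 => p0 a.1 * v.2.2 a.1 a.2) (fun a => a.1) (fun a => a.2.1) ≤ v.1} ∩
    ({v | MI (fun a : 𝒳 × 𝒴 × 𝒵 => p0 a.1 * v.2.2 a.1 a.2) (fun a => a.1)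
        (fun a => a.2.2) ≤ v.2.1} ∩
     {v | MI (fun a : 𝒳 × 𝒴 × 𝒵 => p0 a.1 * v.2.2 a.1 a.2) (fun a => a.1)
        (fun a => a.2) ≤ v.1 + v.2.1}) with hCdef
  have hclosed : IsClosed C := by
    refine IsClosed.inter ?_ (IsClosed.inter ?_ ?_)
    · exact isClosed_le ((cont_MI p0 _ _).comp (continuous_snd.comp continuous_snd))
        continuous_fst
    · exact isClosed_le ((cont_MI p0 _ _).comp (continuous_snd.comp continuous_snd))
        (continuous_fst.comp continuous_snd)
    · exact isClosed_le ((cont_MI p0 _ _).comp (continuous_snd.comp continuous_snd))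
        (continuous_fst.add (continuous_fst.comp continuous_snd))
  have hsub : {v : ℝ × ℝ × (𝒳 → 𝒴 × 𝒵 → ℝ) | 0 ≤ v.1 ∧ 0 ≤ v.2.1 ∧
      (∀ x, IsPMF (v.2.2 x)) ∧ BroadcastAchievable p0 v.1 v.2.1 v.2.2} ⊆ C := by
    rintro v ⟨hR1, hR2, hqpmf, i, j, decY, decZ, htv⟩
    have hc1 : ∀ n : ℕ, 1 ≤ n → Real.log (Fintype.card (Fin (msgCount n v.1)))
        ≤ ((n : ℝ) * v.1 + 2) * Real.log 2 := by
      intro n _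
      rw [Fintype.card_fin]
      calc Real.log (msgCount n v.1) ≤ ((n : ℝ) * v.1 + 1) * Real.log 2 :=
            log_msgCount_le v.1 hR1 n
        _ ≤ ((n : ℝ) * v.1 + 2) * Real.log 2 := by nlinarith
    have hc2 : ∀ n : ℕ, 1 ≤ n → Real.log (Fintype.card (Fin (msgCount n v.2.1)))
        ≤ ((n : ℝ) * v.2.1 + 2) * Real.log 2 := by
      intro n _
      rw [Fintype.card_fin]
      calc Real.log (msgCount n v.2.1) ≤ ((n : ℝ) * v.2.1 + 1) * Real.log 2 :=
            log_msgCount_le v.2.1 hR2 n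
        _ ≤ ((n : ℝ) * v.2.1 + 2) * Real.log 2 := by nlinarith
    have hc3 : ∀ n : ℕ, 1 ≤ n →
        Real.log (Fintype.card (Fin (msgCount n v.1) × Fin (msgCount n v.2.1)))
        ≤ ((n : ℝ) * (v.1 + v.2.1) + 2) * Real.log 2 := by
      intro n _
      rw [Fintype.card_prod, Fintype.card_fin, Fintype.card_fin]
      have hm1 : (0 : ℝ) < msgCount n v.1 := by
        have : 0 < msgCount n v.1 := Nat.ceil_pos.mpr (Real.rpow_pos_of_pos (by norm_num) _)
        exact_mod_cast this
      have hm2 : (0 : ℝ) < msgCount n v.2.1 := by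
        have : 0 < msgCount n v.2.1 := Nat.ceil_pos.mpr (Real.rpow_pos_of_pos (by norm_num) _)
        exact_mod_cast this
      have : ((msgCount n v.1 * msgCount n v.2.1 : ℕ) : ℝ)
          = (msgCount n v.1 : ℝ) * (msgCount n v.2.1 : ℝ) := by push_cast; ring
      rw [this, Real.log_mul (ne_of_gt hm1) (ne_of_gt hm2)]
      calc Real.log (msgCount n v.1) + Real.log (msgCount n v.2.1)
          ≤ ((n : ℝ) * v.1 + 1) * Real.log 2 + ((n : ℝ) * v.2.1 + 1) * Real.log 2 :=
            add_le_add (log_msgCount_le v.1 hR1 n) (log_msgCount_le v.2.1 hR2 n)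
        _ = ((n : ℝ) * (v.1 + v.2.1) + 2) * Real.log 2 := by ring
    have hA := rate_bound p0 hp0 v.2.2 hqpmf Prod.fst v.1 hR1
      (fun n => Fin (msgCount n v.1)) i decY hc1
      (fun n xs t => (decY n (i n xs) t, decZ n (j n xs) t))
      (fun n xs t => rfl) (fun ε hε => htv ε hε)
    have hB := rate_bound p0 hp0 v.2.2 hqpmf Prod.snd v.2.1 hR2
      (fun n => Fin (msgCount n v.2.1)) j decZ hc2
      (fun n xs t => (decY n (i n xs) t, decZ n (j n xs) t))
      (fun n xs t => rfl) (fun ε hε => htv ε hε)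
    have hS := rate_bound p0 hp0 v.2.2 hqpmf (fun yz => yz) (v.1 + v.2.1) (by linarith)
      (fun n => Fin (msgCount n v.1) × Fin (msgCount n v.2.1))
      (fun n xs => (i n xs, j n xs))
      (fun n m t => (decY n m.1 t, decZ n m.2 t)) hc3
      (fun n xs t => (decY n (i n xs) t, decZ n (j n xs) t))
      (fun n xs t => rfl) (fun ε hε => htv ε hε)
    refine ⟨?_, ?_, ?_⟩
    · show MI _ _ _ ≤ v.1
      rw [MI_eq_MIdn, div_le_iff₀ hlog2]
      exact hA
    · show MI _ _ _ ≤ v.2.1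
      rw [MI_eq_MIdn, div_le_iff₀ hlog2]
      exact hB
    · show MI _ _ _ ≤ v.1 + v.2.1
      rw [MI_eq_MIdn, div_le_iff₀ hlog2]
      exact hS
  have hfinal : broadcastCapacity p0 ⊆ C := closure_minimal hsub hclosed
  have hmem := hfinal h
  exact ⟨hmem.1, hmem.2.1, hmem.2.2⟩


/-- Outer bound for the broadcast network: every `(R1, R2, p(y,z|x))` in the coordination
capacity region satisfies `R1 ≥ I(X;Y)`, `R2 ≥ I(X;Z)` and `R1 + R2 ≥ I(X;Y,Z)`,
computed under `p0(x)p(y,z|x)`. -/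
theorem broadcast_outer_bound {𝒳 𝒴 𝒵 : Type} [Fintype 𝒳] [Fintype 𝒴] [Fintype 𝒵]
    (p0 : 𝒳 → ℝ) (hp0 : IsPMF p0) (R1 R2 : ℝ) (q : 𝒳 → 𝒴 × 𝒵 → ℝ)
    (h : (R1, R2, q) ∈ broadcastCapacity p0) :
    MI (fun a : 𝒳 × 𝒴 × 𝒵 => p0 a.1 * q a.1 a.2) (fun a => a.1) (fun a => a.2.1) ≤ R1 ∧
    MI (fun a : 𝒳 × 𝒴 × 𝒵 => p0 a.1 * q a.1 a.2) (fun a => a.1) (fun a => a.2.2) ≤ R2 ∧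
    MI (fun a : 𝒳 × 𝒴 × 𝒵 => p0 a.1 * q a.1 a.2) (fun a => a.1) (fun a => a.2)
      ≤ R1 + R2 := by
  open OB in
exact broadcast_outer_bound_aux p0 hp0 R1 R2 q h
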